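/- Let n and d be natural numbers and let X, Y : {1,…,n} → ℝ^d be two tuples of points in d-dimensional Euclidean space such that ‖X_i − X_j‖₂ = ‖Y_i − Y_j‖₂ for all i, j ∈ {1,…,n}. Then there exist a linear isometry Q of ℝ^d (i.e., an orthogonal linear map of Euclidean d-space onto itself) and a translation vector s ∈ ℝ^d such that Y_i = Q(X_i) + s for every i ∈ {1,…,n}. -/

import Mathlib

open scoped RealInnerProductSpace


/-- Any two finite point configurations in Euclidean `d`-space with identical pairwise
Euclidean distances differ by a rigid motion: there is a linear isometry (orthogonal
transformation) `Q` of `ℝ^d` and a translation `s` with `Y i = Q (X i) + s` for all `i`. -/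
theorem rigid_motion_of_equal_distances (n d : ℕ)
    (X Y : Fin n → EuclideanSpace ℝ (Fin d))
    (h : ∀ i j : Fin n, ‖X i - X j‖ = ‖Y i - Y j‖) :
    ∃ (Q : EuclideanSpace ℝ (Fin d) ≃ₗᵢ[ℝ] EuclideanSpace ℝ (Fin d))
      (s : EuclideanSpace ℝ (Fin d)),
      ∀ i : Fin n, Y i = Q (X i) + s := by
  rcases Nat.eq_zero_or_pos n with rfl | hn
  · exact ⟨LinearIsometryEquiv.refl ℝ _, 0, fun i => i.elim0⟩
  set i₀ : Fin n := ⟨0, hn⟩ with hi₀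
  set X' : Fin n → EuclideanSpace ℝ (Fin d) := fun i => X i - X i₀ with hX'
  set Y' : Fin n → EuclideanSpace ℝ (Fin d) := fun i => Y i - Y i₀ with hY'
  have hgram : ∀ i j, ⟪X' i, X' j⟫ = ⟪Y' i, Y' j⟫ := by
    intro i j
    have h1 : ‖X' i‖ = ‖Y' i‖ := h i i₀
    have h2 : ‖X' j‖ = ‖Y' j‖ := h j i₀
    have h3 : ‖X' i - X' j‖ = ‖Y' i - Y' j‖ := by
      simpa [hX', hY', sub_sub_sub_cancel_right] using h i j
    have e1 := norm_sub_sq_real (X' i) (X' j)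
    have e2 := norm_sub_sq_real (Y' i) (Y' j)
    rw [h1, h2, h3] at e1
    linarith
  let b := PiLp.basisFun 2 ℝ (Fin n)
  let A : EuclideanSpace ℝ (Fin n) →ₗ[ℝ] EuclideanSpace ℝ (Fin d) := b.constr ℝ X'
  let B : EuclideanSpace ℝ (Fin n) →ₗ[ℝ] EuclideanSpace ℝ (Fin d) := b.constr ℝ Y'
  have hAB : ∀ u v, ⟪A u, A v⟫ = ⟪B u, B v⟫ := by
    have key : (innerₗ _).compl₁₂ A A = (innerₗ _).compl₁₂ B B := by
      apply b.ext; intro i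
      apply b.ext; intro j
      simp only [LinearMap.compl₁₂_apply, innerₗ_apply_apply, Module.Basis.constr_basis, A, B]
      exact hgram i j
    intro u v
    have := LinearMap.congr_fun (LinearMap.congr_fun key u) v
    simpa using this
  have hnorm : ∀ u, ‖A u‖ = ‖B u‖ := by
    intro u
    have h2 : ‖A u‖ ^ 2 = ‖B u‖ ^ 2 := by
      rw [← real_inner_self_eq_norm_sq, ← real_inner_self_eq_norm_sq]
      exact hAB u u
    rw [← Real.sqrt_sq (norm_nonneg (A u)), ← Real.sqrt_sq (norm_nonneg (B u)), h2]
  have hker : LinearMap.ker A ≤ LinearMap.ker B := by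
    intro u hu
    rw [LinearMap.mem_ker] at hu ⊢
    rw [← norm_eq_zero, ← hnorm u, hu, norm_zero]
  -- Build the isometry on the range of A
  let Bbar : (EuclideanSpace ℝ (Fin n) ⧸ LinearMap.ker A) →ₗ[ℝ] EuclideanSpace ℝ (Fin d) :=
    (LinearMap.ker A).liftQ B hker
  let L₀ : LinearMap.range A →ₗ[ℝ] EuclideanSpace ℝ (Fin d) :=
    Bbar.comp (A.quotKerEquivRange.symm : LinearMap.range A →ₗ[ℝ] _)
  have hL₀ : ∀ u : EuclideanSpace ℝ (Fin n), ∀ hmem : A u ∈ LinearMap.range A,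
      L₀ ⟨A u, hmem⟩ = B u := by
    intro u hmem
    have : A.quotKerEquivRange.symm ⟨A u, hmem⟩ = Submodule.Quotient.mk u := by
      rw [LinearEquiv.symm_apply_eq]
      exact Subtype.ext (A.quotKerEquivRange_apply_mk u)
    simp only [L₀, LinearMap.comp_apply, LinearEquiv.coe_coe, this]
    exact Submodule.liftQ_apply _ _ _
  have hL₀norm : ∀ x : LinearMap.range A, ‖L₀ x‖ = ‖x‖ := by
    rintro ⟨x, u, rfl⟩
    rw [hL₀ u ⟨u, rfl⟩, ← hnorm u]
    rfl
  let L : LinearMap.range A →ₗᵢ[ℝ] EuclideanSpace ℝ (Fin d) := ⟨L₀, hL₀norm⟩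
  let F : EuclideanSpace ℝ (Fin d) →ₗᵢ[ℝ] EuclideanSpace ℝ (Fin d) := L.extend
  let Q : EuclideanSpace ℝ (Fin d) ≃ₗᵢ[ℝ] EuclideanSpace ℝ (Fin d) :=
    F.toLinearIsometryEquiv rfl
  have hQ : ∀ i, Q (X' i) = Y' i := by
    intro i
    have hmem : X' i ∈ LinearMap.range A := ⟨b i, by simp [A, Module.Basis.constr_basis]⟩
    have : Q (X' i) = F (X' i) := rfl
    rw [this]
    have : F (X' i) = F ((⟨X' i, hmem⟩ : LinearMap.range A) : EuclideanSpace ℝ (Fin d)) := rfl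
    rw [this, LinearIsometry.extend_apply]
    have : L ⟨X' i, hmem⟩ = L₀ ⟨X' i, hmem⟩ := rfl
    rw [this]
    have hAb : A (b i) = X' i := by simp [A, Module.Basis.constr_basis]
    have hBb : B (b i) = Y' i := by simp [B, Module.Basis.constr_basis]
    rw [show (⟨X' i, hmem⟩ : LinearMap.range A) = ⟨A (b i), ⟨b i, rfl⟩⟩ from
      Subtype.ext hAb.symm, hL₀ (b i) ⟨b i, rfl⟩, hBb]
  refine ⟨Q, Y i₀ - Q (X i₀), fun i => ?_⟩
  have := hQ i
  rw [hX', hY'] at this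
  simp only [map_sub] at this
  have : Q (X i) - Q (X i₀) = Y i - Y i₀ := by
    rw [← map_sub]; exact hQ i
  linear_combination (norm := abel) -this
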